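/- Let k ≤ m be fixed integers with k < 0, and let f_n(t,u_{n+k},…,u_{n+m}), τ_n(t,u_n), φ_n(t,u_n) (n ∈ ℤ) be continuously differentiable real functions satisfying the determining equation for Lie point symmetries of the generalized Volterra-type equation identically. If ∂f_n/∂u_{n+k} is nowhere zero for every n ∈ ℤ, then τ_n(t,u_n) is independent of u_n, i.e. τ_n(t,u_n) = τ_n(t), and moreover τ_{n+k}(t) = τ_n(t) for all n ∈ ℤ and t ∈ ℝ (τ_n is |k|-periodic in n). -/

import Mathlib

/-- The index type `{k, k+1, …, m}` of the arguments `u_{n+k}, …, u_{n+m}` of `fₙ`. -/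
abbrev ShiftIdx (k m : ℤ) : Type := {l : ℤ // l ∈ Finset.Icc k m}

/-- The tuple `(u_{j+k}, …, u_{j+m})` read off from a configuration `U : ℤ → ℝ`. -/
def shiftArg (k m : ℤ) (U : ℤ → ℝ) (j : ℤ) : ShiftIdx k m → ℝ := fun i => U (j + i.1)

/-- The partial derivative `∂f_j/∂u_{j+l}` evaluated at `(t, u_{j+k}, …, u_{j+m})`,
where the `u`'s are read off from the configuration `U : ℤ → ℝ`. -/
noncomputable def pdF (k m : ℤ) (f : ℤ → ℝ → (ShiftIdx k m → ℝ) → ℝ) (t : ℝ) (U : ℤ → ℝ)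
    (j : ℤ) (l : ShiftIdx k m) : ℝ :=
  deriv (fun z => f j t (Function.update (shiftArg k m U j) l z)) (U (j + l.1))

/-- The determining equation for Lie point symmetries of the generalized Volterra-type
equation `u̇ₙ = fₙ(t, u_{n+k}, …, u_{n+m})`, with point-symmetry characteristic
`Qₙ = φₙ(t,uₙ) − τₙ(t,uₙ) u̇ₙ`, required to hold identically in `t` and in all the
jet variables (encoded by an arbitrary configuration `U : ℤ → ℝ`). -/
def GenVolterraDetEq (k m : ℤ) (f : ℤ → ℝ → (ShiftIdx k m → ℝ) → ℝ)
    (τ φ : ℤ → ℝ → ℝ → ℝ) : Prop :=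
  ∀ (n : ℤ) (t : ℝ) (U : ℤ → ℝ),
    (∑ l : ShiftIdx k m, pdF k m f t U n l *
        (φ (n + l.1) t (U (n + l.1)) -
          τ (n + l.1) t (U (n + l.1)) * f (n + l.1) t (shiftArg k m U (n + l.1)))) +
      (deriv (fun s => τ n s (U n)) t +
          deriv (fun z => τ n t z) (U n) * f n t (shiftArg k m U n)) *
        f n t (shiftArg k m U n) +
      τ n t (U n) *
        (deriv (fun s => f n s (shiftArg k m U n)) t +
          ∑ l : ShiftIdx k m, pdF k m f t U n l * f (n + l.1) t (shiftArg k m U (n + l.1))) -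
      deriv (fun s => φ n s (U n)) t -
      deriv (fun z => φ n t z) (U n) * f n t (shiftArg k m U n) = 0

/-- Theorem 3.2, second case: for `u̇ₙ = fₙ(t,u_{n+k},…,u_{n+m})` with `k < 0` and
`∂fₙ/∂u_{n+k}` nowhere zero for all `n`, the symmetry coefficient `τₙ(t,uₙ)` is
independent of `uₙ` and is `|k|`-periodic in `n`. -/
theorem genVolterra_tau_k_periodic (k m : ℤ) (hkm : k ≤ m) (hk : k < 0)
    (f : ℤ → ℝ → (ShiftIdx k m → ℝ) → ℝ) (τ φ : ℤ → ℝ → ℝ → ℝ)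
    (hf : ∀ n, ContDiff ℝ 1 (fun p : ℝ × (ShiftIdx k m → ℝ) => f n p.1 p.2))
    (hτ : ∀ n, ContDiff ℝ 1 (fun p : ℝ × ℝ => τ n p.1 p.2))
    (hφ : ∀ n, ContDiff ℝ 1 (fun p : ℝ × ℝ => φ n p.1 p.2))
    (hdet : GenVolterraDetEq k m f τ φ)
    (hnd : ∀ (n : ℤ) (t : ℝ) (v : ShiftIdx k m → ℝ),
      deriv (fun z => f n t (Function.update v ⟨k, Finset.mem_Icc.mpr ⟨le_rfl, hkm⟩⟩ z))
        (v ⟨k, Finset.mem_Icc.mpr ⟨le_rfl, hkm⟩⟩) ≠ 0) :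
    (∀ (n : ℤ) (t u u' : ℝ), τ n t u = τ n t u') ∧
      (∀ (n : ℤ) (t u : ℝ), τ (n + k) t u = τ n t u) := by
  
  classical
  have key : ∀ (n : ℤ) (t a b : ℝ), τ (n + k) t a = τ n t b := by
    intro n t a b
    set l0 : ShiftIdx k m := ⟨k, Finset.mem_Icc.mpr ⟨le_rfl, hkm⟩⟩ with hl0
    have hl0v : (l0 : ℤ) = k := by rw [hl0]
    set U0 : ℤ → ℝ := fun j => if j = n then b else if j = n + k then a else 0 with hU0def
    have hU0n : U0 n = b := by simp [hU0def]
    have hU0nk : U0 (n + k) = a := by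
      simp only [hU0def]
      rw [if_neg (by omega)]
      simp
    set p : ℤ := n + 2 * k with hp
    have hval : ∀ (z : ℝ) (j : ℤ), j ≠ p → Function.update U0 p z j = U0 j :=
      fun z j h => Function.update_of_ne h _ _
    have hshift : ∀ (z : ℝ) (j : ℤ), n + k < j →
        shiftArg k m (Function.update U0 p z) j = shiftArg k m U0 j := by
      intro z j hj
      funext i
      have hi := Finset.mem_Icc.mp i.2
      exact Function.update_of_ne (by omega) _ _
    set v0 : ShiftIdx k m → ℝ := shiftArg k m U0 (n + k) with hv0
    set F : ℝ → ℝ := fun z => f (n + k) t (Function.update v0 l0 z) with hF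
    have hFapp : ∀ z : ℝ, f (n + k) t (Function.update v0 l0 z) = F z := fun z => rfl
    set pdF0 : ℝ := pdF k m f t U0 n l0 with hpdF0
    have hshiftk : ∀ z : ℝ, shiftArg k m (Function.update U0 p z) (n + k)
        = Function.update v0 l0 z := by
      intro z
      funext i
      by_cases hi : i = l0
      · subst hi
        show Function.update U0 p z (n + k + (l0 : ℤ)) = _
        rw [hl0v, show n + k + k = p by omega, Function.update_self, Function.update_self]
      · have hi1 : (i : ℤ) ≠ k := fun h => hi (Subtype.ext (by rw [h, hl0v]))
        have hi2 := Finset.mem_Icc.mp i.2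
        rw [Function.update_of_ne hi]
        exact Function.update_of_ne (by omega) _ _
    have hpdF : ∀ (z : ℝ) (l : ShiftIdx k m),
        pdF k m f t (Function.update U0 p z) n l = pdF k m f t U0 n l := by
      intro z l
      have hl := Finset.mem_Icc.mp l.2
      unfold pdF
      rw [hshift z n (by omega), hval z (n + l.1) (by omega)]
    have hsum1 : ∀ z : ℝ,
        (∑ l : ShiftIdx k m, pdF k m f t (Function.update U0 p z) n l *
            (φ (n + l.1) t (Function.update U0 p z (n + l.1)) -
              τ (n + l.1) t (Function.update U0 p z (n + l.1)) *
                f (n + l.1) t (shiftArg k m (Function.update U0 p z) (n + l.1))))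
        = (∑ l ∈ Finset.univ.erase l0, pdF k m f t U0 n l *
            (φ (n + l.1) t (U0 (n + l.1)) -
              τ (n + l.1) t (U0 (n + l.1)) * f (n + l.1) t (shiftArg k m U0 (n + l.1))))
          + pdF0 * (φ (n + k) t a - τ (n + k) t a * F z) := by
      intro z
      rw [← Finset.sum_erase_add _ _ (Finset.mem_univ l0)]
      congr 1
      · refine Finset.sum_congr rfl fun l hl => ?_
        have hl1 : l ≠ l0 := (Finset.mem_erase.mp hl).1
        have hlk : (l : ℤ) ≠ k := fun h => hl1 (Subtype.ext (by rw [h, hl0v]))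
        have hl2 := Finset.mem_Icc.mp l.2
        rw [hpdF z l, hval z (n + l.1) (by omega), hshift z (n + l.1) (by omega)]
      · rw [hl0v, hpdF z l0, hval z (n + k) (by omega), hU0nk, hshiftk z, hFapp]
    have hsum2 : ∀ z : ℝ,
        (∑ l : ShiftIdx k m, pdF k m f t (Function.update U0 p z) n l *
            f (n + l.1) t (shiftArg k m (Function.update U0 p z) (n + l.1)))
        = (∑ l ∈ Finset.univ.erase l0, pdF k m f t U0 n l *
            f (n + l.1) t (shiftArg k m U0 (n + l.1))) + pdF0 * F z := by
      intro z
      rw [← Finset.sum_erase_add _ _ (Finset.mem_univ l0)]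
      congr 1
      · refine Finset.sum_congr rfl fun l hl => ?_
        have hl1 : l ≠ l0 := (Finset.mem_erase.mp hl).1
        have hlk : (l : ℤ) ≠ k := fun h => hl1 (Subtype.ext (by rw [h, hl0v]))
        have hl2 := Finset.mem_Icc.mp l.2
        rw [hpdF z l, hshift z (n + l.1) (by omega)]
      · rw [hl0v, hpdF z l0, hshiftk z, hFapp]
    have hdiff : ∀ z1 z2 : ℝ,
        pdF0 * (τ n t b - τ (n + k) t a) * (F z1 - F z2) = 0 := by
      intro z1 z2
      have h1 := hdet n t (Function.update U0 p z1)
      have h2 := hdet n t (Function.update U0 p z2)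
      rw [hsum1 z1, hsum2 z1, hval z1 n (by omega), hshift z1 n (by omega), hU0n] at h1
      rw [hsum1 z2, hsum2 z2, hval z2 n (by omega), hshift z2 n (by omega), hU0n] at h2
      linear_combination h1 - h2
    have hupd : Differentiable ℝ (fun z : ℝ => Function.update v0 l0 z) := by
      rw [differentiable_pi]
      intro i
      by_cases hi : i = l0
      · subst hi
        simp only [Function.update_self]
        exact differentiable_id
      · simp only [Function.update_of_ne hi]
        exact differentiable_const _
    have hFd : Differentiable ℝ F := by
      have h := ((hf (n + k)).differentiable one_ne_zero).comp
        ((differentiable_const t).prodMk hupd)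
      exact h
    have hFne : ∀ z : ℝ, deriv F z ≠ 0 := by
      intro z
      have h := hnd (n + k) t (Function.update v0 l0 z)
      have h2 : (fun w => f (n + k) t (Function.update (Function.update v0 l0 z) l0 w)) = F := by
        funext w
        rw [Function.update_idem, hFapp]
      rw [h2, Function.update_self] at h
      exact h
    have hFinj : F 0 - F 1 ≠ 0 := by
      refine sub_ne_zero_of_ne fun hcon => ?_
      obtain ⟨c, _, hc⟩ := exists_deriv_eq_zero (f := F) (by norm_num : (0:ℝ) < 1)
        hFd.continuous.continuousOn hcon
      exact hFne c hc
    have hpdF0ne : pdF0 ≠ 0 := by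
      have h := hnd n t (shiftArg k m U0 n)
      rw [hpdF0]
      exact h
    have hmul := hdiff 0 1
    rcases mul_eq_zero.mp hmul with h | h
    · rcases mul_eq_zero.mp h with h' | h'
      · exact absurd h' hpdF0ne
      · linarith
    · exact absurd h hFinj
  constructor
  · intro n t u u'
    have h1 := key (n - k) t u (0:ℝ)
    have h2 := key (n - k) t u' (0:ℝ)
    rw [show n - k + k = n by ring] at h1 h2
    rw [h1, h2]
  · intro n t u
    exact key n t u u
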